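/- Let f : ℝⁿ → ℝ be differentiable, let x, v ∈ ℝⁿ, and define y_α = α·x + (1−α)·v. Then for any c ≥ 0 there exists α ∈ [0,1] such that α·⟨∇f(y_α), x − v⟩ ≤ c·(f(x) − f(y_α)). -/

import Mathlib

open RealInnerProductSpace

theorem exists_good_alpha {n : ℕ}
    (f : EuclideanSpace ℝ (Fin n) → ℝ) (hdiff : Differentiable ℝ f)
    (x v : EuclideanSpace ℝ (Fin n)) (c : ℝ) (hc : 0 ≤ c) :
    ∃ α ∈ Set.Icc (0:ℝ) 1,
      α * ⟪gradient f (α • x + (1 - α) • v), x - v⟫ ≤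
        c * (f x - f (α • x + (1 - α) • v)) := by
  set g : ℝ → ℝ := fun α => f (α • x + (1 - α) • v) with hg
  have hgd : ∀ α : ℝ, HasDerivAt g (fderiv ℝ f (α • x + (1 - α) • v) (x - v)) α := by
    intro α
    have hL : HasDerivAt (fun α : ℝ => α • x + (1 - α) • v) (x - v) α := by
      have h1 : HasDerivAt (fun α : ℝ => α • x) x α := by
        simpa using (hasDerivAt_id α).smul_const x
      have h2 : HasDerivAt (fun α : ℝ => (1 - α) • v) (-v) α := by
        have := ((hasDerivAt_id α).const_sub 1).smul_const v
        simpa using this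
      have h3 := h1.add h2
      rw [← sub_eq_add_neg] at h3
      exact h3
    have := ((hdiff (α • x + (1 - α) • v)).hasFDerivAt).comp_hasDerivAt α hL
    exact this
  have hgc : ContinuousOn g (Set.Icc 0 1) :=
    (Continuous.comp hdiff.continuous (by continuity)).continuousOn
  obtain ⟨α₀, hα₀, hmin⟩ := isCompact_Icc.exists_isMinOn (Set.nonempty_Icc.2 zero_le_one) hgc
  refine ⟨α₀, hα₀, ?_⟩
  set y₀ := α₀ • x + (1 - α₀) • v with hy₀
  set d : ℝ := fderiv ℝ f y₀ (x - v) with hd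
  -- gradient inner product equals d
  have hgrad : ⟪gradient f y₀, x - v⟫ = d := by
    rw [gradient, InnerProductSpace.toDual_symm_apply]
  -- tangent cone: -α₀ ∈ posTangentConeAt (Icc 0 1) α₀
  have hcone : (0 : ℝ) - α₀ ∈ posTangentConeAt (Set.Icc (0:ℝ) 1) α₀ := by
    apply sub_mem_posTangentConeAt_of_segment_subset
    rw [segment_symm, segment_eq_Icc hα₀.1]
    exact Set.Icc_subset_Icc le_rfl hα₀.2
  -- derivative inequality at the minimum
  have hF : HasFDerivWithinAt g (ContinuousLinearMap.smulRight (1 : ℝ →L[ℝ] ℝ) d)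
      (Set.Icc (0:ℝ) 1) α₀ := (hgd α₀).hasFDerivAt.hasFDerivWithinAt
  have h1 := (hmin.localize).hasFDerivWithinAt_nonneg hF hcone
  have h2 : α₀ * d ≤ 0 := by
    simp only [ContinuousLinearMap.smulRight_apply, ContinuousLinearMap.one_apply,
      smul_eq_mul] at h1
    nlinarith
  have h3 : g α₀ ≤ f x := by
    have h := hmin (by simp : (1:ℝ) ∈ Set.Icc (0:ℝ) 1)
    have : g 1 = f x := by simp [hg]
    simpa [this] using h
  rw [hgrad]
  have : 0 ≤ c * (f x - g α₀) := mul_nonneg hc (by linarith)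
  calc α₀ * d ≤ 0 := h2
    _ ≤ c * (f x - f y₀) := this
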